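/- Let 𝓗 be a complex Hilbert space and H₁, H₂ : 𝓗 → 𝓗 bounded self-adjoint operators. Then for all Ψ₁, Ψ₂ ∈ 𝓗 and all t ≥ 0, ‖exp(−i t H₁)Ψ₁ − exp(−i t H₂)Ψ₂‖² ≤ ‖Ψ₁ − Ψ₂‖² + 2·∫₀ᵗ |⟪exp(−i s H₁)Ψ₁, (H₁ − H₂) exp(−i s H₂)Ψ₂⟫| ds, where exp denotes the operator exponential of bounded operators. -/

import Mathlib

open scoped ComplexInnerProductSpace


lemma exp_smul_hasDerivAt
    {𝓗 : Type*} [NormedAddCommGroup 𝓗] [InnerProductSpace ℂ 𝓗] [CompleteSpace 𝓗]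
    (A : 𝓗 →L[ℂ] 𝓗) (Ψ : 𝓗) (s : ℝ) :
    HasDerivAt (fun s : ℝ => NormedSpace.exp ((s : ℂ) • A) Ψ)
      (A (NormedSpace.exp ((s : ℂ) • A) Ψ)) s := by
  have h1 : HasDerivAt (fun z : ℂ => NormedSpace.exp (z • A))
      (A * NormedSpace.exp ((s : ℂ) • A)) (s : ℂ) :=
    hasDerivAt_exp_smul_const' A (s : ℂ)
  have h2 : HasDerivAt (fun s : ℝ => (s : ℂ)) 1 s := Complex.ofRealCLM.hasDerivAt
  have h3 : HasDerivAt (fun s : ℝ => NormedSpace.exp ((s : ℂ) • A))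
      (A * NormedSpace.exp ((s : ℂ) • A)) s := by
    simpa [Function.comp_def] using h1.scomp s h2
  have h4 := ((ContinuousLinearMap.apply ℂ 𝓗 Ψ).restrictScalars ℝ).hasFDerivAt.comp_hasDerivAt s h3
  simpa [ContinuousLinearMap.mul_apply, Function.comp_def] using h4

-- for self-adjoint K, ⟪x, K x⟫ has zero imaginary part
lemma selfAdjoint_inner_im
    {𝓗 : Type*} [NormedAddCommGroup 𝓗] [InnerProductSpace ℂ 𝓗] [CompleteSpace 𝓗]
    {K : 𝓗 →L[ℂ] 𝓗} (hK : IsSelfAdjoint K) (x : 𝓗) :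
    (⟪x, K x⟫).im = 0 := by
  have h := hK.isSymmetric x x
  have hc : (starRingEnd ℂ) ⟪x, K x⟫ = ⟪x, K x⟫ := by
    calc (starRingEnd ℂ) ⟪x, K x⟫ = ⟪K x, x⟫ := inner_conj_symm _ _
      _ = ⟪x, K x⟫ := h
  exact Complex.conj_eq_iff_im.mp hc


/-- Bounded-operator form of the Duhamel comparison lemma for two Schrödinger evolutions. -/
theorem duhamel_comparison_bounded
    {𝓗 : Type*} [NormedAddCommGroup 𝓗] [InnerProductSpace ℂ 𝓗] [CompleteSpace 𝓗]
    (H₁ H₂ : 𝓗 →L[ℂ] 𝓗) (hH₁ : IsSelfAdjoint H₁) (hH₂ : IsSelfAdjoint H₂)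
    (Ψ₁ Ψ₂ : 𝓗) (t : ℝ) (ht : 0 ≤ t) :
    ‖NormedSpace.exp ((-(t : ℂ) * Complex.I) • H₁) Ψ₁ -
        NormedSpace.exp ((-(t : ℂ) * Complex.I) • H₂) Ψ₂‖ ^ 2 ≤
      ‖Ψ₁ - Ψ₂‖ ^ 2 +
        2 * ∫ s in (0 : ℝ)..t,
          ‖⟪NormedSpace.exp ((-(s : ℂ) * Complex.I) • H₁) Ψ₁,
              (H₁ - H₂) (NormedSpace.exp ((-(s : ℂ) * Complex.I) • H₂) Ψ₂)⟫‖ := by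
  have hrw : ∀ (s : ℝ) (H : 𝓗 →L[ℂ] 𝓗),
      (-(s : ℂ) * Complex.I) • H = (s : ℂ) • ((-Complex.I) • H) := by
    intro s H
    rw [smul_smul]
    ring_nf
  set A₁ : 𝓗 →L[ℂ] 𝓗 := (-Complex.I) • H₁ with hA₁
  set A₂ : 𝓗 →L[ℂ] 𝓗 := (-Complex.I) • H₂ with hA₂
  set w₁ : ℝ → 𝓗 := fun s => NormedSpace.exp ((s : ℂ) • A₁) Ψ₁ with hw₁
  set w₂ : ℝ → 𝓗 := fun s => NormedSpace.exp ((s : ℂ) • A₂) Ψ₂ with hw₂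
  set w : ℝ → 𝓗 := fun s => w₁ s - w₂ s with hw
  -- derivatives
  have hd₁ : ∀ s, HasDerivAt w₁ (A₁ (w₁ s)) s := fun s => exp_smul_hasDerivAt A₁ Ψ₁ s
  have hd₂ : ∀ s, HasDerivAt w₂ (A₂ (w₂ s)) s := fun s => exp_smul_hasDerivAt A₂ Ψ₂ s
  have hdw : ∀ s, HasDerivAt w (A₁ (w₁ s) - A₂ (w₂ s)) s := fun s => (hd₁ s).sub (hd₂ s)
  set f : ℝ → ℝ := fun s => ‖w s‖ ^ 2 with hf
  set f' : ℝ → ℝ := fun s => (⟪w s, A₁ (w₁ s) - A₂ (w₂ s)⟫ + ⟪A₁ (w₁ s) - A₂ (w₂ s), w s⟫).re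
    with hf'
  have hdf : ∀ s, HasDerivAt f (f' s) s := by
    intro s
    have h := HasDerivAt.inner ℂ (hdw s) (hdw s)
    have h2 := Complex.reCLM.hasFDerivAt.comp_hasDerivAt s h
    have e : f = ⇑Complex.reCLM ∘ fun t => ⟪w t, w t⟫ := by
      funext u
      exact (inner_self_eq_norm_sq (𝕜 := ℂ) (w u)).symm
    rw [e]; exact h2
  set g : ℝ → ℝ := fun s => ‖⟪w₁ s, (H₁ - H₂) (w₂ s)⟫‖ with hg
  -- pointwise bound f' ≤ 2g
  have hbound : ∀ s, f' s ≤ 2 * g s := by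
    intro s
    have e1 : A₁ (w₁ s) - A₂ (w₂ s)
        = (-Complex.I) • (H₁ (w s) + (H₁ - H₂) (w₂ s)) := by
      simp only [hA₁, hA₂, hw, ContinuousLinearMap.smul_apply, ContinuousLinearMap.sub_apply,
        map_sub, ← smul_add]
      module
    have e2 : f' s = 2 * (⟪w s, A₁ (w₁ s) - A₂ (w₂ s)⟫).re := by
      simp only [f']
      rw [← inner_conj_symm (A₁ (w₁ s) - A₂ (w₂ s)) (w s)]
      rw [Complex.add_re, Complex.conj_re]
      ring
    rw [e2, e1]
    rw [inner_smul_right]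
    have hre : ((-Complex.I) * ⟪w s, H₁ (w s) + (H₁ - H₂) (w₂ s)⟫).re
        = (⟪w s, H₁ (w s) + (H₁ - H₂) (w₂ s)⟫).im := by
      simp [Complex.mul_re]
    rw [hre, inner_add_right, Complex.add_im, selfAdjoint_inner_im hH₁ (w s), zero_add]
    have e3 : ⟪w s, (H₁ - H₂) (w₂ s)⟫
        = ⟪w₁ s, (H₁ - H₂) (w₂ s)⟫ - ⟪w₂ s, (H₁ - H₂) (w₂ s)⟫ := by
      simp [hw, inner_sub_left]
      abel
    rw [e3, Complex.sub_im, selfAdjoint_inner_im (hH₁.sub hH₂) (w₂ s), sub_zero]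
    have := Complex.abs_im_le_norm ⟪w₁ s, (H₁ - H₂) (w₂ s)⟫
    have h4 : (⟪w₁ s, (H₁ - H₂) (w₂ s)⟫).im ≤ g s := by
      simp only [hg]
      exact (le_abs_self _).trans this
    linarith
  -- continuity
  have hcw₁ : Continuous w₁ := by
    rw [continuous_iff_continuousAt]; exact fun s => (hd₁ s).continuousAt
  have hcw₂ : Continuous w₂ := by
    rw [continuous_iff_continuousAt]; exact fun s => (hd₂ s).continuousAt
  have hcw : Continuous w := hcw₁.sub hcw₂
  have hcf' : Continuous f' := by
    apply Complex.continuous_re.comp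
    have hc : Continuous fun s => A₁ (w₁ s) - A₂ (w₂ s) :=
      (A₁.continuous.comp hcw₁).sub (A₂.continuous.comp hcw₂)
    exact Continuous.add (hcw.inner hc) (hc.inner hcw)
  have hcg : Continuous g := by
    apply Continuous.norm
    exact hcw₁.inner ((H₁ - H₂).continuous.comp hcw₂)
  -- FTC
  have hftc : ∫ s in (0:ℝ)..t, f' s = f t - f 0 :=
    intervalIntegral.integral_eq_sub_of_hasDerivAt (fun s _ => hdf s)
      (hcf'.intervalIntegrable 0 t)
  have hmono : ∫ s in (0:ℝ)..t, f' s ≤ ∫ s in (0:ℝ)..t, 2 * g s :=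
    intervalIntegral.integral_mono_on ht (hcf'.intervalIntegrable 0 t)
      ((continuous_const.mul hcg).intervalIntegrable 0 t) (fun s _ => hbound s)
  rw [intervalIntegral.integral_const_mul] at hmono
  have hf0 : f 0 = ‖Ψ₁ - Ψ₂‖ ^ 2 := by
    have hz : (((0 : ℝ) : ℂ)) = 0 := by norm_num
    simp only [f, w, w₁, w₂, hz, zero_smul, NormedSpace.exp_zero,
      ContinuousLinearMap.one_apply]
  -- rewrite goal in terms of f and g
  have hgoal₁ : ∀ (H : 𝓗 →L[ℂ] 𝓗) (Ψ : 𝓗) (s : ℝ),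
      NormedSpace.exp ((-(s : ℂ) * Complex.I) • H) Ψ
        = NormedSpace.exp ((s : ℂ) • ((-Complex.I) • H)) Ψ := by
    intro H Ψ s; rw [hrw]
  calc ‖NormedSpace.exp ((-(t : ℂ) * Complex.I) • H₁) Ψ₁ -
        NormedSpace.exp ((-(t : ℂ) * Complex.I) • H₂) Ψ₂‖ ^ 2 = f t := by
        rw [hgoal₁ H₁ Ψ₁ t, hgoal₁ H₂ Ψ₂ t]
    _ ≤ f 0 + 2 * ∫ s in (0:ℝ)..t, g s := by linarith
    _ = _ := by
        rw [hf0]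
        congr 1
        congr 1
        apply intervalIntegral.integral_congr
        intro s _
        simp only [hg, hw₁, hw₂]
        rw [hgoal₁ H₁ Ψ₁ s, hgoal₁ H₂ Ψ₂ s]
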